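/- arXiv:0908.2942 — 7 statements merged into one kernel-verified Lean document; each statement's English description precedes it below -/
import Mathlib

section
/- Let A : ℝ → Matrix (n×n, ℝ) be differentiable at t₀ with A(t) symmetric for all t in a neighborhood of t₀, and let λ : ℝ → ℝ and u : ℝ → ℝⁿ be differentiable at t₀ and satisfy A(t)·u(t) = λ(t)·u(t) and ‖u(t)‖ = 1 for all t in a neighborhood of t₀. Then λ′(t₀) = ⟨u(t₀), A′(t₀)·u(t₀)⟩. -/
open scoped InnerProductSpace

attribute [local instance] Matrix.normedAddCommGroup Matrix.normedSpace

/-- First-order perturbation formula: `λ′(t₀) = ⟨u(t₀), A′(t₀)·u(t₀)⟩`. -/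
theorem stmt_1 (n : ℕ) (A : ℝ → Matrix (Fin n) (Fin n) ℝ)
    (A' : Matrix (Fin n) (Fin n) ℝ) (lam : ℝ → ℝ) (lam' : ℝ)
    (u : ℝ → EuclideanSpace ℝ (Fin n)) (u' : EuclideanSpace ℝ (Fin n)) (t₀ : ℝ)
    (hA : HasDerivAt A A' t₀)
    (hsymm : ∀ᶠ t in nhds t₀, (A t).IsSymm)
    (hlam : HasDerivAt lam lam' t₀)
    (hu : HasDerivAt u u' t₀)
    (heig : ∀ᶠ t in nhds t₀, (A t).mulVec (u t) = lam t • u t)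
    (hnorm : ∀ᶠ t in nhds t₀, ‖u t‖ = 1) :
    lam' = ⟪u t₀, WithLp.toLp 2 (A'.mulVec (u t₀))⟫_ℝ := by
  have hA0 : (A t₀).mulVec (u t₀) = lam t₀ • u t₀ := heig.self_of_nhds
  have hs0 : (A t₀).IsSymm := hsymm.self_of_nhds
  have hAij : ∀ i j, HasDerivAt (fun t => A t i j) (A' i j) t₀ := fun i j =>
    hasDerivAt_pi.mp (hasDerivAt_pi.mp hA i) j
  have hui : ∀ i, HasDerivAt (fun t => u t i) (u' i) t₀ := by
    intro i
    have h := (EuclideanSpace.proj (𝕜 := ℝ) i).hasFDerivAt.comp_hasDerivAt t₀ hu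
    exact h
  have hsq : ∀ t, ∑ i, u t i * u t i = ‖u t‖ ^ 2 := by
    intro t
    rw [EuclideanSpace.norm_eq, Real.sq_sqrt (by positivity)]
    exact Finset.sum_congr rfl fun i _ => by rw [Real.norm_eq_abs, sq_abs, sq]
  have horth : ∑ i, u' i * u t₀ i = 0 := by
    have h1 : HasDerivAt (fun t => ∑ i, u t i * u t i)
        (∑ i, (u' i * u t₀ i + u t₀ i * u' i)) t₀ :=
      HasDerivAt.fun_sum fun i _ => (hui i).mul (hui i)
    have h2 : (fun t => ∑ i, u t i * u t i) =ᶠ[nhds t₀] fun _ => (1:ℝ) := by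
      filter_upwards [hnorm] with t ht
      rw [hsq t, ht]; norm_num
    have h3 := (h1.congr_of_eventuallyEq h2.symm).unique (hasDerivAt_const t₀ 1)
    have h4 : (2:ℝ) * ∑ i, u' i * u t₀ i = 0 := by
      rw [Finset.mul_sum, ← h3]
      exact Finset.sum_congr rfl fun i _ => by ring
    linarith
  have hg : HasDerivAt (fun t => ∑ i, u t i * ∑ j, A t i j * u t j)
      (∑ i, (u' i * (∑ j, A t₀ i j * u t₀ j)
        + u t₀ i * (∑ j, (A' i j * u t₀ j + A t₀ i j * u' j)))) t₀ :=
    HasDerivAt.fun_sum fun i _ => (hui i).mul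
      (HasDerivAt.fun_sum fun j _ => (hAij i j).mul (hui j))
  have hgl : (fun t => ∑ i, u t i * ∑ j, A t i j * u t j) =ᶠ[nhds t₀] lam := by
    filter_upwards [heig, hnorm] with t ht hn
    have hcoord : ∀ i, ∑ j, A t i j * u t j = lam t * u t i := by
      intro i
      have h := congrFun ht i
      simpa [Matrix.mulVec, dotProduct] using h
    calc ∑ i, u t i * ∑ j, A t i j * u t j
        = ∑ i, lam t * (u t i * u t i) := by
          exact Finset.sum_congr rfl fun i _ => by rw [hcoord i]; ring
      _ = lam t * ∑ i, u t i * u t i := by rw [Finset.mul_sum]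
      _ = lam t := by rw [hsq t, hn]; norm_num
  have hlamD := ((hg.congr_of_eventuallyEq hgl.symm).unique hlam).symm
  have hcoord0 : ∀ i, ∑ j, A t₀ i j * u t₀ j = lam t₀ * u t₀ i := by
    intro i
    have h := congrFun hA0 i
    simpa [Matrix.mulVec, dotProduct] using h
  have hsymm0 : ∀ i j, A t₀ i j = A t₀ j i := fun i j => (Matrix.IsSymm.apply hs0 i j).symm
  have hterm3 : ∑ i, ∑ j, u t₀ i * (A t₀ i j * u' j)
      = lam t₀ * ∑ j, u' j * u t₀ j := by
    rw [Finset.sum_comm, Finset.mul_sum]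
    refine Finset.sum_congr rfl fun j _ => ?_
    calc ∑ i, u t₀ i * (A t₀ i j * u' j)
        = (∑ i, A t₀ j i * u t₀ i) * u' j := by
          rw [Finset.sum_mul]
          exact Finset.sum_congr rfl fun i _ => by rw [hsymm0 i j]; ring
      _ = lam t₀ * (u' j * u t₀ j) := by rw [hcoord0 j]; ring
  have inner_eq : ⟪u t₀, WithLp.toLp 2 (A'.mulVec (u t₀))⟫_ℝ = ∑ i, ∑ j, u t₀ i * (A' i j * u t₀ j) := by
    simp only [PiLp.inner_apply, RCLike.inner_apply, conj_trivial]
    refine Finset.sum_congr rfl fun i _ => ?_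
    show (A'.mulVec (u t₀) i) * u t₀ i = _
    rw [mul_comm]
    rw [Matrix.mulVec, dotProduct, Finset.mul_sum]
  rw [hlamD, inner_eq]
  have split : ∀ i ∈ Finset.univ, u' i * (∑ j, A t₀ i j * u t₀ j)
      + u t₀ i * (∑ j, (A' i j * u t₀ j + A t₀ i j * u' j))
      = lam t₀ * (u' i * u t₀ i) + ((∑ j, u t₀ i * (A' i j * u t₀ j))
        + ∑ j, u t₀ i * (A t₀ i j * u' j)) := by
    intro i _
    rw [hcoord0 i, Finset.sum_add_distrib, mul_add, Finset.mul_sum, Finset.mul_sum]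
    ring
  rw [Finset.sum_congr rfl split, Finset.sum_add_distrib, Finset.sum_add_distrib,
    hterm3, ← Finset.mul_sum, horth]
  ring
end

section
/- Let A : ℝ → Matrix (n×n, ℝ) be differentiable at t₀ with A(t) symmetric for all t in a neighborhood of t₀, and let λ : ℝ → ℝ and u : ℝ → ℝⁿ be differentiable at t₀ and satisfy A(t)·u(t) = λ(t)·u(t) and ‖u(t)‖ = 1 for all t in a neighborhood of t₀. Suppose (v₁, …, vₙ) is an orthonormal basis of ℝⁿ with A(t₀)·vⱼ = μⱼ·vⱼ for pairwise distinct real numbers μ₁, …, μₙ, and suppose u(t₀) = v_k and λ(t₀) = μ_k for some index k. Then u′(t₀) = Σ_{j ≠ k} (⟨vⱼ, A′(t₀)·v_k⟩ / (μ_k − μⱼ)) · vⱼ. -/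
open scoped InnerProductSpace

attribute [local instance] Matrix.normedAddCommGroup Matrix.normedSpace

/-- Eigenvector derivative expansion in an orthonormal eigenbasis with simple spectrum:
`u′(t₀) = Σ_{j ≠ k} (⟨vⱼ, A′(t₀)v_k⟩ / (μ_k − μⱼ)) vⱼ`. -/
theorem stmt_3 (n : ℕ) (A : ℝ → Matrix (Fin n) (Fin n) ℝ)
    (A' : Matrix (Fin n) (Fin n) ℝ) (lam : ℝ → ℝ) (lam' : ℝ)
    (u : ℝ → EuclideanSpace ℝ (Fin n)) (u' : EuclideanSpace ℝ (Fin n)) (t₀ : ℝ)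
    (hA : HasDerivAt A A' t₀)
    (hsymm : ∀ᶠ t in nhds t₀, (A t).IsSymm)
    (hlam : HasDerivAt lam lam' t₀)
    (hu : HasDerivAt u u' t₀)
    (heig : ∀ᶠ t in nhds t₀, (A t).mulVec (u t) = lam t • u t)
    (hnorm : ∀ᶠ t in nhds t₀, ‖u t‖ = 1)
    (v : Fin n → EuclideanSpace ℝ (Fin n)) (μ : Fin n → ℝ)
    (hON : Orthonormal ℝ v) (hbasis : ⊤ ≤ Submodule.span ℝ (Set.range v))
    (hv : ∀ j, (A t₀).mulVec (v j) = μ j • v j)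
    (hdist : Function.Injective μ)
    (k : Fin n) (huk : u t₀ = v k) (hlamk : lam t₀ = μ k) :
    u' = ∑ j ∈ Finset.univ.erase k, (⟪v j, WithLp.toLp 2 (A'.mulVec (v k))⟫_ℝ / (μ k - μ j)) • v j := by
  classical
  -- component derivatives
  have hu_i : ∀ i : Fin n, HasDerivAt (fun t => u t i) (u' i) t₀ := by
    intro i
    have := ((EuclideanSpace.proj i : EuclideanSpace ℝ (Fin n) →L[ℝ] ℝ)).hasFDerivAt.comp_hasDerivAt t₀ hu
    exact this
  have hA_ij : ∀ i j : Fin n, HasDerivAt (fun t => A t i j) (A' i j) t₀ := by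
    intro i j
    have h1 : HasDerivAt (fun t => A t i) (A' i) t₀ :=
      (ContinuousLinearMap.proj (R := ℝ) (φ := fun _ : Fin n => Fin n → ℝ)
        i).hasFDerivAt.comp_hasDerivAt t₀ hA
    exact (ContinuousLinearMap.proj (R := ℝ) (φ := fun _ : Fin n => ℝ)
        j).hasFDerivAt.comp_hasDerivAt t₀ h1
  -- key componentwise derivative identity
  have key : ∀ i : Fin n,
      A'.mulVec (v k) i + (A t₀).mulVec u' i = lam' * v k i + μ k * u' i := by
    intro i
    have hL : HasDerivAt (fun t => ∑ j, A t i j * u t j)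
        (∑ j, (A' i j * u t₀ j + A t₀ i j * u' j)) t₀ :=
      HasDerivAt.fun_sum fun j _ => (hA_ij i j).mul (hu_i j)
    have hR : HasDerivAt (fun t => lam t * u t i) (lam' * u t₀ i + lam t₀ * u' i) t₀ :=
      hlam.mul (hu_i i)
    have heq : (fun t => ∑ j, A t i j * u t j) =ᶠ[nhds t₀] fun t => lam t * u t i := by
      filter_upwards [heig] with t ht
      have h := congrArg (fun w => w i) ht
      simpa [Matrix.mulVec, dotProduct, PiLp.smul_apply, smul_eq_mul] using h
    have huniq := (hL.congr_of_eventuallyEq heq.symm).unique hR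
    rw [huk, hlamk] at huniq
    simpa [Matrix.mulVec, dotProduct, Finset.sum_add_distrib] using huniq
  -- inner product formula
  have inner_eq : ∀ x y : EuclideanSpace ℝ (Fin n), ⟪x, y⟫_ℝ = ∑ i, x i * y i := by
    intro x y
    simp [PiLp.inner_apply, RCLike.inner_apply, conj_trivial]
    exact Finset.sum_congr rfl fun i _ => mul_comm _ _
  have hsy : (A t₀).IsSymm := hsymm.self_of_nhds
  -- symmetry of A t₀ in the inner product
  have hsym2 : ∀ (j : Fin n) (x : EuclideanSpace ℝ (Fin n)),
      ∑ i, v j i * (A t₀).mulVec x i = μ j * ∑ i, v j i * x i := by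
    intro j x
    have h1 : ∑ i, v j i * (A t₀).mulVec x i = ∑ i, (A t₀).mulVec (v j) i * x i := by
      simp only [Matrix.mulVec, dotProduct, Finset.mul_sum, Finset.sum_mul]
      rw [Finset.sum_comm]
      refine Finset.sum_congr rfl fun i _ => Finset.sum_congr rfl fun l _ => ?_
      rw [hsy.apply l i]
      ring
    rw [h1]
    rw [Finset.mul_sum]
    refine Finset.sum_congr rfl fun i _ => ?_
    have := congrArg (fun w => w i) (hv j)
    simp only at this
    rw [this]
    simp [PiLp.smul_apply, smul_eq_mul, mul_assoc]
  -- coefficient equation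
  have coeff : ∀ j : Fin n,
      ⟪v j, WithLp.toLp 2 (A'.mulVec (v k))⟫_ℝ + μ j * ⟪v j, u'⟫_ℝ
        = lam' * ⟪v j, v k⟫_ℝ + μ k * ⟪v j, u'⟫_ℝ := by
    intro j
    have h1 : ∑ i, v j i * (A'.mulVec (v k) i + (A t₀).mulVec u' i)
        = ∑ i, v j i * (lam' * v k i + μ k * u' i) :=
      Finset.sum_congr rfl fun i _ => by rw [key i]
    simp only [mul_add, Finset.sum_add_distrib] at h1
    have e1 : ∑ i, v j i * (lam' * v k i) = lam' * ∑ i, v j i * v k i := by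
      rw [Finset.mul_sum]; exact Finset.sum_congr rfl fun i _ => by ring
    have e2 : ∑ i, v j i * (μ k * u' i) = μ k * ∑ i, v j i * u' i := by
      rw [Finset.mul_sum]; exact Finset.sum_congr rfl fun i _ => by ring
    rw [e1, e2, hsym2 j u'] at h1
    rw [inner_eq, inner_eq, inner_eq]
    exact h1
  -- ⟪v k, u'⟫ = 0
  have hk0 : ⟪v k, u'⟫_ℝ = 0 := by
    have hip : HasDerivAt (fun t => ⟪u t, u t⟫_ℝ) (⟪u t₀, u'⟫_ℝ + ⟪u', u t₀⟫_ℝ) t₀ :=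
      HasDerivAt.inner ℝ hu hu
    have hconst : (fun t => ⟪u t, u t⟫_ℝ) =ᶠ[nhds t₀] fun _ => (1 : ℝ) := by
      filter_upwards [hnorm] with t ht
      rw [real_inner_self_eq_norm_sq, ht, one_pow]
    have h0 := (hip.congr_of_eventuallyEq hconst.symm).unique (hasDerivAt_const t₀ 1)
    have hcm := real_inner_comm u' (u t₀)
    have : ⟪u t₀, u'⟫_ℝ = 0 := by linarith
    rwa [huk] at this
  -- coefficients for j ≠ k
  have hcoef : ∀ j : Fin n, j ≠ k →
      ⟪v j, u'⟫_ℝ = ⟪v j, WithLp.toLp 2 (A'.mulVec (v k))⟫_ℝ / (μ k - μ j) := by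
    intro j hjk
    have hvjk : ⟪v j, v k⟫_ℝ = 0 := hON.2 hjk
    have hc := coeff j
    rw [hvjk, mul_zero, zero_add] at hc
    have hne : μ k - μ j ≠ 0 := sub_ne_zero.mpr fun h => hjk (hdist h).symm
    rw [eq_div_iff hne]
    linarith
  -- assemble using the orthonormal basis expansion
  let b : OrthonormalBasis (Fin n) ℝ (EuclideanSpace ℝ (Fin n)) := OrthonormalBasis.mk hON hbasis
  have hb : ∀ j, b j = v j := fun j => congrFun (OrthonormalBasis.coe_mk hON hbasis) j
  have hrep : ∑ j, ⟪v j, u'⟫_ℝ • v j = u' := by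
    have := b.sum_repr' u'
    simpa [hb] using this
  rw [← hrep, ← Finset.add_sum_erase _ _ (Finset.mem_univ k), hk0, zero_smul, zero_add]
  refine Finset.sum_congr rfl fun j hj => ?_
  rw [hcoef j (Finset.ne_of_mem_erase hj)]
end

section
/- Let A : ℝ → Matrix (n×n, ℝ) be twice differentiable at t₀ with A(t) symmetric for all t in a neighborhood of t₀, and let λ : ℝ → ℝ and u : ℝ → ℝⁿ be twice differentiable at t₀ and satisfy A(t)·u(t) = λ(t)·u(t) and ‖u(t)‖ = 1 for all t in a neighborhood of t₀. Then λ″(t₀) = ⟨u(t₀), A″(t₀)·u(t₀)⟩ + ⟨u(t₀), A′(t₀)·u′(t₀)⟩ + ⟨u′(t₀), A′(t₀)·u(t₀)⟩. -/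
open scoped InnerProductSpace

attribute [local instance] Matrix.normedAddCommGroup Matrix.normedSpace

lemma coordD {n : ℕ} {x : ℝ → EuclideanSpace ℝ (Fin n)} {x' : EuclideanSpace ℝ (Fin n)} {t : ℝ}
    (hx : HasDerivAt x x' t) (i : Fin n) : HasDerivAt (fun s => x s i) (x' i) t :=
  ((EuclideanSpace.proj i).hasFDerivAt.comp_hasDerivAt t hx : )

lemma entryD {n : ℕ} {M : ℝ → Matrix (Fin n) (Fin n) ℝ} {M' : Matrix (Fin n) (Fin n) ℝ} {t : ℝ}
    (hM : HasDerivAt M M' t) (i j : Fin n) : HasDerivAt (fun s => M s i j) (M' i j) t := by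
  have h1 : HasDerivAt (fun s => M s i) (M' i) t := hasDerivAt_pi.mp hM i
  exact hasDerivAt_pi.mp h1 j

lemma keyD {n : ℕ} {M : ℝ → Matrix (Fin n) (Fin n) ℝ} {M' : Matrix (Fin n) (Fin n) ℝ}
    {x y : ℝ → EuclideanSpace ℝ (Fin n)} {x' y' : EuclideanSpace ℝ (Fin n)} {t : ℝ}
    (hM : HasDerivAt M M' t) (hx : HasDerivAt x x' t) (hy : HasDerivAt y y' t) :
    HasDerivAt (fun s => ⟪x s, WithLp.toLp 2 ((M s).mulVec (y s))⟫_ℝ)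
      (⟪x', WithLp.toLp 2 ((M t).mulVec (y t))⟫_ℝ + ⟪x t, WithLp.toLp 2 (M'.mulVec (y t))⟫_ℝ + ⟪x t, WithLp.toLp 2 ((M t).mulVec y')⟫_ℝ) t := by
  have key : HasDerivAt (fun s => ∑ i, x s i * ∑ j, M s i j * y s j)
      (∑ i, (x' i * ∑ j, M t i j * y t j
        + x t i * ∑ j, (M' i j * y t j + M t i j * y' j))) t := by
    apply HasDerivAt.fun_sum
    intro i _
    exact (coordD hx i).mul <| HasDerivAt.fun_sum fun j _ =>
      ((entryD hM i j).mul (coordD hy j))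
  have heq : ∀ s, ⟪x s, WithLp.toLp 2 ((M s).mulVec (y s))⟫_ℝ = ∑ i, x s i * ∑ j, M s i j * y s j := by
    intro s; simp [PiLp.inner_apply, Matrix.mulVec, dotProduct, mul_comm (Finset.sum _ _)]
  have hD : (⟪x', WithLp.toLp 2 ((M t).mulVec (y t))⟫_ℝ + ⟪x t, WithLp.toLp 2 (M'.mulVec (y t))⟫_ℝ + ⟪x t, WithLp.toLp 2 ((M t).mulVec y')⟫_ℝ)
      = ∑ i, (x' i * ∑ j, M t i j * y t j
        + x t i * ∑ j, (M' i j * y t j + M t i j * y' j)) := by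
    simp [PiLp.inner_apply, Matrix.mulVec, dotProduct, Finset.sum_add_distrib, mul_add]
    simp only [mul_comm (Finset.sum _ _), add_assoc]
  rw [hD]
  exact key.congr_of_eventuallyEq (Filter.Eventually.of_forall fun s => (heq s))

lemma symmD {n : ℕ} {M : Matrix (Fin n) (Fin n) ℝ} (hM : M.IsSymm)
    (x y : EuclideanSpace ℝ (Fin n)) :
    ⟪x, WithLp.toLp 2 (M.mulVec y)⟫_ℝ
      = ⟪y, WithLp.toLp 2 (M.mulVec x)⟫_ℝ := by
  simp only [PiLp.inner_apply, RCLike.inner_apply, conj_trivial, PiLp.toLp_apply, Matrix.mulVec, dotProduct,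
    Finset.mul_sum, Finset.sum_mul]
  rw [Finset.sum_comm]
  refine Finset.sum_congr rfl fun i _ => Finset.sum_congr rfl fun j _ => ?_
  rw [hM.apply i j]; ring

/-- Second-derivative identity
`λ″(t₀) = ⟨u, A″u⟩ + ⟨u, A′u′⟩ + ⟨u′, A′u⟩` (all evaluated at `t₀`). -/
theorem stmt_4 (n : ℕ) (A : ℝ → Matrix (Fin n) (Fin n) ℝ)
    (A' : ℝ → Matrix (Fin n) (Fin n) ℝ) (A'' : Matrix (Fin n) (Fin n) ℝ)
    (lam lam' : ℝ → ℝ) (lam'' : ℝ)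
    (u u' : ℝ → EuclideanSpace ℝ (Fin n)) (u'' : EuclideanSpace ℝ (Fin n)) (t₀ : ℝ)
    (hA : ∀ᶠ t in nhds t₀, HasDerivAt A (A' t) t)
    (hA' : HasDerivAt A' A'' t₀)
    (hsymm : ∀ᶠ t in nhds t₀, (A t).IsSymm)
    (hlam : ∀ᶠ t in nhds t₀, HasDerivAt lam (lam' t) t)
    (hlam' : HasDerivAt lam' lam'' t₀)
    (hu : ∀ᶠ t in nhds t₀, HasDerivAt u (u' t) t)
    (hu' : HasDerivAt u' u'' t₀)
    (heig : ∀ᶠ t in nhds t₀, (A t).mulVec (u t) = lam t • u t)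
    (hnorm : ∀ᶠ t in nhds t₀, ‖u t‖ = 1) :
    lam'' = ⟪u t₀, WithLp.toLp 2 (A''.mulVec (u t₀))⟫_ℝ + ⟪u t₀, WithLp.toLp 2 ((A' t₀).mulVec (u' t₀))⟫_ℝ
      + ⟪u' t₀, WithLp.toLp 2 ((A' t₀).mulVec (u t₀))⟫_ℝ := by
  -- Step A : first-order formula eventually near t₀
  have heig2 := heig.eventually_nhds
  have hnorm2 := hnorm.eventually_nhds
  have hstepA : lam' =ᶠ[nhds t₀]
      fun t => ⟪u t, WithLp.toLp 2 ((A' t).mulVec (u t))⟫_ℝ := by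
    filter_upwards [hA, hu, hlam, hsymm, heig, heig2, hnorm2] with t hAt hut hlamt hsymmt heigt
      heig2t hnorm2t
    -- orthogonality ⟪u, u'⟫ = 0
    have hin : HasDerivAt (fun s => ⟪u s, u s⟫_ℝ) (⟪u t, u' t⟫_ℝ + ⟪u' t, u t⟫_ℝ) t :=
      hut.inner ℝ hut
    have hinext : (fun _ : ℝ => (1 : ℝ)) =ᶠ[nhds t] fun s => ⟪u s, u s⟫_ℝ := by
      filter_upwards [hnorm2t] with s hns
      rw [real_inner_self_eq_norm_sq, hns]; norm_num
    have hzero : (0 : ℝ) = ⟪u t, u' t⟫_ℝ + ⟪u' t, u t⟫_ℝ :=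
      ((hasDerivAt_const t (1 : ℝ)).congr_of_eventuallyEq hinext.symm).unique hin
    have horto : ⟪u t, u' t⟫_ℝ = 0 := by
      have hc := real_inner_comm (u t) (u' t); linarith
    -- derivative of ⟪u, A u⟫ and congruence with lam
    have hg := keyD hAt hut hut
    have hgext : lam =ᶠ[nhds t] fun s => ⟪u s, WithLp.toLp 2 ((A s).mulVec (u s))⟫_ℝ := by
      filter_upwards [heig2t, hnorm2t] with s hs hns
      rw [hs, WithLp.toLp_smul, WithLp.toLp_ofLp, real_inner_smul_right, real_inner_self_eq_norm_sq, hns]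
      norm_num
    have hlam2 : HasDerivAt lam
        (⟪u' t, WithLp.toLp 2 ((A t).mulVec (u t))⟫_ℝ
          + ⟪u t, WithLp.toLp 2 ((A' t).mulVec (u t))⟫_ℝ
          + ⟪u t, WithLp.toLp 2 ((A t).mulVec (u' t))⟫_ℝ) t :=
      hg.congr_of_eventuallyEq hgext
    have huniq := hlam2.unique hlamt
    have e1 : ⟪u' t, WithLp.toLp 2 ((A t).mulVec (u t))⟫_ℝ = 0 := by
      rw [heigt, WithLp.toLp_smul, WithLp.toLp_ofLp, real_inner_smul_right, real_inner_comm, horto, mul_zero]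
    have e2 : ⟪u t, WithLp.toLp 2 ((A t).mulVec (u' t))⟫_ℝ = 0 := by
      rw [symmD hsymmt, heigt, WithLp.toLp_smul, WithLp.toLp_ofLp, real_inner_smul_right, real_inner_comm, horto, mul_zero]
    rw [e1, e2, zero_add, add_zero] at huniq
    exact huniq.symm
  -- Step B : differentiate the first-order formula at t₀
  have hut0 : HasDerivAt u (u' t₀) t₀ := hu.self_of_nhds
  have hB := keyD hA' hut0 hut0
  have hlam''2 : HasDerivAt lam'
      (⟪u' t₀, WithLp.toLp 2 ((A' t₀).mulVec (u t₀))⟫_ℝ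
        + ⟪u t₀, WithLp.toLp 2 (A''.mulVec (u t₀))⟫_ℝ
        + ⟪u t₀, WithLp.toLp 2 ((A' t₀).mulVec (u' t₀))⟫_ℝ) t₀ :=
    hB.congr_of_eventuallyEq hstepA
  have := hlam'.unique hlam''2
  rw [this]; ring
end

section
/- Let A : ℝ → Matrix (n×n, ℝ) be twice differentiable at t₀ with A(t) symmetric for all t in a neighborhood of t₀, and let λ : ℝ → ℝ and u : ℝ → ℝⁿ be twice differentiable at t₀ and satisfy A(t)·u(t) = λ(t)·u(t) and ‖u(t)‖ = 1 for all t in a neighborhood of t₀. Suppose (v₁, …, vₙ) is an orthonormal basis of ℝⁿ with A(t₀)·vⱼ = μⱼ·vⱼ for pairwise distinct real numbers μ₁, …, μₙ, and suppose u(t₀) = v_k and λ(t₀) = μ_k for some index k. Then λ″(t₀) = ⟨v_k, A″(t₀)·v_k⟩ + 2·Σ_{j ≠ k} ⟨vⱼ, A′(t₀)·v_k⟩² / (μ_k − μⱼ). -/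
open scoped InnerProductSpace

attribute [local instance] Matrix.normedAddCommGroup Matrix.normedSpace

noncomputable def mvB (n : ℕ) : Matrix (Fin n) (Fin n) ℝ →L[ℝ]
    EuclideanSpace ℝ (Fin n) →L[ℝ] EuclideanSpace ℝ (Fin n) :=
  LinearMap.toContinuousLinearMap
    ((LinearMap.toContinuousLinearMap :
        (EuclideanSpace ℝ (Fin n) →ₗ[ℝ] EuclideanSpace ℝ (Fin n)) ≃ₗ[ℝ] _).toLinearMap.comp
      (Matrix.toEuclideanLin : Matrix (Fin n) (Fin n) ℝ ≃ₗ[ℝ] _).toLinearMap)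

lemma mvB_apply {n : ℕ} (M : Matrix (Fin n) (Fin n) ℝ) (x : EuclideanSpace ℝ (Fin n)) :
    mvB n M x = WithLp.toLp 2 (M.mulVec x) := rfl

lemma inner_eq_dot {n : ℕ} (x y : EuclideanSpace ℝ (Fin n)) :
    ⟪x, y⟫_ℝ = dotProduct x y := by
  simp [PiLp.inner_apply, dotProduct, mul_comm]

lemma symm_innerB {n : ℕ} {M : Matrix (Fin n) (Fin n) ℝ} (hM : M.IsSymm)
    (x y : EuclideanSpace ℝ (Fin n)) :
    ⟪x, mvB n M y⟫_ℝ = ⟪mvB n M x, y⟫_ℝ := by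
  rw [inner_eq_dot, inner_eq_dot]
  show dotProduct x (M.mulVec y) = dotProduct (M.mulVec x) y
  rw [Matrix.dotProduct_mulVec, ← Matrix.mulVec_transpose, hM.eq, dotProduct_comm]


/-- Second-order perturbation formula (eigenvalue repulsion):
`λ″(t₀) = ⟨v_k, A″(t₀)v_k⟩ + 2 Σ_{j ≠ k} ⟨vⱼ, A′(t₀)v_k⟩² / (μ_k − μⱼ)`. -/
theorem stmt_5 (n : ℕ) (A : ℝ → Matrix (Fin n) (Fin n) ℝ)
    (A' : ℝ → Matrix (Fin n) (Fin n) ℝ) (A'' : Matrix (Fin n) (Fin n) ℝ)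
    (lam lam' : ℝ → ℝ) (lam'' : ℝ)
    (u u' : ℝ → EuclideanSpace ℝ (Fin n)) (u'' : EuclideanSpace ℝ (Fin n)) (t₀ : ℝ)
    (hA : ∀ᶠ t in nhds t₀, HasDerivAt A (A' t) t)
    (hA' : HasDerivAt A' A'' t₀)
    (hsymm : ∀ᶠ t in nhds t₀, (A t).IsSymm)
    (hlam : ∀ᶠ t in nhds t₀, HasDerivAt lam (lam' t) t)
    (hlam' : HasDerivAt lam' lam'' t₀)
    (hu : ∀ᶠ t in nhds t₀, HasDerivAt u (u' t) t)
    (hu' : HasDerivAt u' u'' t₀)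
    (heig : ∀ᶠ t in nhds t₀, (A t).mulVec (u t) = lam t • u t)
    (hnorm : ∀ᶠ t in nhds t₀, ‖u t‖ = 1)
    (v : Fin n → EuclideanSpace ℝ (Fin n)) (μ : Fin n → ℝ)
    (hON : Orthonormal ℝ v) (hbasis : ⊤ ≤ Submodule.span ℝ (Set.range v))
    (hv : ∀ j, (A t₀).mulVec (v j) = μ j • v j)
    (hdist : Function.Injective μ)
    (k : Fin n) (huk : u t₀ = v k) (hlamk : lam t₀ = μ k) :
    lam'' = ⟪v k, WithLp.toLp 2 (A''.mulVec (v k))⟫_ℝ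
      + 2 * ∑ j ∈ Finset.univ.erase k, ⟪v j, WithLp.toLp 2 ((A' t₀).mulVec (v k))⟫_ℝ ^ 2 / (μ k - μ j) := by
  set B := mvB n with hB
  set w : EuclideanSpace ℝ (Fin n) := u' t₀ with hw
  have hu0 : HasDerivAt u w t₀ := hu.self_of_nhds
  have hA0 : HasDerivAt A (A' t₀) t₀ := hA.self_of_nhds
  have hlam0 : HasDerivAt lam (lam' t₀) t₀ := hlam.self_of_nhds
  have hBA : ∀ {f : ℝ → Matrix (Fin n) (Fin n) ℝ} {f' : Matrix (Fin n) (Fin n) ℝ} {t : ℝ},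
      HasDerivAt f f' t → HasDerivAt (fun s => B (f s)) (B f') t := by
    intro f f' t hf
    exact (B.hasFDerivAt.comp_hasDerivAt t hf : HasDerivAt (⇑B ∘ f) (B f') t)
  -- Step 1: first-derivative identity eventually
  have hE : ∀ᶠ t in nhds t₀,
      B (A' t) (u t) + B (A t) (u' t) = lam' t • u t + lam t • u' t := by
    filter_upwards [hA, hu, hlam, heig.eventually_nhds] with t hAt hut hlamt heq
    have hL : HasDerivAt (fun s => B (A s) (u s)) (B (A' t) (u t) + B (A t) (u' t)) t :=
      (hBA hAt).clm_apply hut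
    have hR : HasDerivAt (fun s => lam s • u s) (lam t • u' t + lam' t • u t) t :=
      hlamt.smul hut
    have heq' : (fun s => B (A s) (u s)) =ᶠ[nhds t] fun s => lam s • u s := by
      filter_upwards [heq] with s hs
      rw [mvB_apply, hs]; rfl
    have := ((heq'.hasDerivAt_iff.mp hL)).unique hR
    rw [this]; abel
  -- Step 2: second-derivative identity at t₀
  have hL2 : HasDerivAt (fun t => B (A' t) (u t) + B (A t) (u' t))
      ((B A'' (u t₀) + B (A' t₀) w) + (B (A' t₀) (u' t₀) + B (A t₀) u'')) t₀ :=
    ((hBA hA').clm_apply hu0).add ((hBA hA0).clm_apply hu')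
  have hR2 : HasDerivAt (fun t => lam' t • u t + lam t • u' t)
      ((lam' t₀ • w + lam'' • u t₀) + (lam t₀ • u'' + lam' t₀ • u' t₀)) t₀ :=
    (hlam'.smul hu0).add (hlam0.smul hu')
  have V : (B A'' (v k) + B (A' t₀) w) + (B (A' t₀) w + B (A t₀) u'')
      = (lam' t₀ • w + lam'' • v k) + (μ k • u'' + lam' t₀ • w) := by
    have := ((Filter.EventuallyEq.hasDerivAt_iff hE).mp hL2).unique hR2
    rw [huk, hlamk] at this
    simpa [hw] using this
  -- Step 3: A' t₀ is symmetric
  have hsymm0 : (A t₀).IsSymm := hsymm.self_of_nhds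
  have hsymm' : (A' t₀).IsSymm := by
    let T : Matrix (Fin n) (Fin n) ℝ →L[ℝ] Matrix (Fin n) (Fin n) ℝ :=
      LinearMap.toContinuousLinearMap (Matrix.transposeLinearEquiv (Fin n) (Fin n) ℝ ℝ).toLinearMap
    have hT : HasDerivAt (fun t => (A t).transpose) ((A' t₀).transpose) t₀ :=
      (T.hasFDerivAt.comp_hasDerivAt t₀ hA0 : HasDerivAt (⇑T ∘ A) (T (A' t₀)) t₀)
    have heq : (fun t => (A t).transpose) =ᶠ[nhds t₀] A := hsymm.mono fun t h => h
    exact (heq.hasDerivAt_iff.mp hT).unique hA0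
  -- Step 4: ⟪v k, w⟫ = 0
  have hvkw : ⟪v k, w⟫_ℝ = 0 := by
    have h1 : ∀ᶠ t in nhds t₀, ⟪u t, u t⟫_ℝ = (1 : ℝ) := by
      filter_upwards [hnorm] with t ht
      rw [real_inner_self_eq_norm_sq, ht]; norm_num
    have hD : HasDerivAt (fun t => ⟪u t, u t⟫_ℝ) (⟪u t₀, w⟫_ℝ + ⟪w, u t₀⟫_ℝ) t₀ :=
      HasDerivAt.inner ℝ hu0 hu0
    have h0 : HasDerivAt (fun _ : ℝ => (1 : ℝ)) 0 t₀ := hasDerivAt_const t₀ 1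
    have h2 := ((Filter.EventuallyEq.hasDerivAt_iff h1).mp hD).unique h0
    rw [huk] at h2
    have hc : ⟪w, v k⟫_ℝ = ⟪v k, w⟫_ℝ := real_inner_comm _ _
    linarith
  -- inner-product facts
  have hONite := orthonormal_iff_ite.mp hON
  have hAinner : ∀ (j : Fin n) (x : EuclideanSpace ℝ (Fin n)),
      ⟪v j, B (A t₀) x⟫_ℝ = μ j * ⟪v j, x⟫_ℝ := by
    intro j x
    have h1 : ⟪v j, B (A t₀) x⟫_ℝ = ⟪B (A t₀) (v j), x⟫_ℝ := symm_innerB hsymm0 (v j) x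
    have h2 : B (A t₀) (v j) = μ j • v j := by rw [mvB_apply, hv j]; rfl
    rw [h1, h2, real_inner_smul_left]
  -- first-derivative identity at t₀
  have E1 : B (A' t₀) (v k) + B (A t₀) w = lam' t₀ • v k + μ k • w := by
    have := hE.self_of_nhds
    rw [huk, hlamk] at this
    exact this
  -- components of w
  have hcj : ∀ j, j ≠ k → ⟪v j, w⟫_ℝ = ⟪v j, B (A' t₀) (v k)⟫_ℝ / (μ k - μ j) := by
    intro j hjk
    have hne : μ k - μ j ≠ 0 := sub_ne_zero.mpr fun h => hjk (hdist h).symm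
    have hiE := congrArg (fun x : EuclideanSpace ℝ (Fin n) => ⟪v j, x⟫_ℝ) E1
    simp only [inner_add_right, real_inner_smul_right] at hiE
    rw [hAinner j w, hONite j k, if_neg hjk] at hiE
    rw [eq_div_iff hne]
    linarith
  -- ⟪v k, A' w⟫ as a sum
  have hstep9 : ⟪v k, B (A' t₀) w⟫_ℝ
      = ∑ j ∈ Finset.univ.erase k, ⟪v j, B (A' t₀) (v k)⟫_ℝ ^ 2 / (μ k - μ j) := by
    set b : OrthonormalBasis (Fin n) ℝ (EuclideanSpace ℝ (Fin n)) :=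
      OrthonormalBasis.mk hON hbasis with hb
    have hbc : ⇑b = v := OrthonormalBasis.coe_mk hON hbasis
    rw [symm_innerB hsymm']
    have hps := b.sum_inner_mul_inner (B (A' t₀) (v k)) w
    rw [hbc] at hps
    rw [← hps, ← Finset.add_sum_erase _ _ (Finset.mem_univ k), hvkw, mul_zero, zero_add]
    refine Finset.sum_congr rfl fun j hj => ?_
    have hjk : j ≠ k := Finset.ne_of_mem_erase hj
    rw [hcj j hjk, real_inner_comm]
    ring
  -- conclude
  have hfin := congrArg (fun x : EuclideanSpace ℝ (Fin n) => ⟪v k, x⟫_ℝ) V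
  simp only [inner_add_right, real_inner_smul_right] at hfin
  rw [hAinner k u'', hONite k k, if_pos rfl, hvkw, hstep9] at hfin
  have goalB : lam'' = ⟪v k, B A'' (v k)⟫_ℝ
      + 2 * ∑ j ∈ Finset.univ.erase k, ⟪v j, B (A' t₀) (v k)⟫_ℝ ^ 2 / (μ k - μ j) := by
    linarith
  exact goalB
end

section
/- Let B₁ and B₂ be 2×2 real symmetric matrices having no nonzero common eigenvector (there is no v ≠ 0 that is simultaneously an eigenvector of B₁ and of B₂). Define A : ℝ → Matrix (2×2, ℝ) by A(t) = t³·B₁ for t ≥ 0 and A(t) = t³·B₂ for t < 0. Then: (a) A is continuously differentiable on ℝ; and (b) there is no continuous function u : ℝ → ℝ² with ‖u(t)‖ = 1 for all t such that for every t there exists c ∈ ℝ with A(t)·u(t) = c·u(t). -/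
open Filter Set Topology

attribute [local instance] Matrix.normedAddCommGroup Matrix.normedSpace

noncomputable def gcube : ℝ → ℝ := fun t => max t 0 ^ 3

lemma gcube_hasDerivAt (t : ℝ) : HasDerivAt gcube (3 * max t 0 ^ 2) t := by
  rcases lt_trichotomy t 0 with ht | rfl | ht
  · have h0 : max t 0 = 0 := max_eq_right ht.le
    have hc : HasDerivAt (fun _ : ℝ => (0:ℝ)) (3 * max t 0 ^ 2) t := by
      simpa [h0] using (hasDerivAt_const t (0:ℝ))
    refine hc.congr_of_eventuallyEq ?_
    filter_upwards [Iio_mem_nhds ht] with s hs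
    simp [gcube, max_eq_right (le_of_lt (mem_Iio.mp hs))]
  · rw [hasDerivAt_iff_tendsto_slope]
    have hb : Tendsto (fun s : ℝ => s ^ 2) (𝓝[≠] (0:ℝ)) (𝓝 0) := by
      have h : Tendsto (fun s : ℝ => s ^ 2) (𝓝 (0:ℝ)) (𝓝 0) := by
        simpa using (continuous_pow 2).tendsto (0:ℝ)
      exact h.mono_left nhdsWithin_le_nhds
    simp only [max_self, ne_eq, OfNat.ofNat_ne_zero, not_false_eq_true, zero_pow, mul_zero]
    refine squeeze_zero_norm' ?_ hb
    filter_upwards [self_mem_nhdsWithin] with s hs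
    have hs' : (s:ℝ) ≠ 0 := hs
    have hnn : (0:ℝ) ≤ max s 0 := le_max_right _ _
    have h2 : max s 0 ≤ |s| := max_le (le_abs_self s) (abs_nonneg s)
    have h3 : max s 0 ^ 3 ≤ |s| ^ 3 := pow_le_pow_left₀ hnn h2 3
    have hg0 : gcube 0 = 0 := by simp [gcube]
    rw [slope_def_field, hg0, sub_zero, sub_zero]
    rw [Real.norm_eq_abs, abs_div]
    rw [div_le_iff₀ (abs_pos.mpr hs')]
    have : |gcube s| = max s 0 ^ 3 := abs_of_nonneg (pow_nonneg hnn 3)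
    rw [this]
    calc max s 0 ^ 3 ≤ |s| ^ 3 := h3
      _ = s ^ 2 * |s| := by rw [pow_succ, sq_abs]
  · have h0 : max t 0 = t := max_eq_left ht.le
    have hp : HasDerivAt (fun s : ℝ => s ^ 3) (3 * max t 0 ^ 2) t := by
      simpa [h0] using hasDerivAt_pow 3 t
    refine hp.congr_of_eventuallyEq ?_
    filter_upwards [Ioi_mem_nhds ht] with s hs
    simp [gcube, max_eq_left (le_of_lt (mem_Ioi.mp hs))]

lemma gcube_contDiff : ContDiff ℝ 1 gcube := by
  rw [contDiff_one_iff_deriv]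
  refine ⟨fun t => (gcube_hasDerivAt t).differentiableAt, ?_⟩
  have : deriv gcube = fun t => 3 * max t 0 ^ 2 := funext fun t => (gcube_hasDerivAt t).deriv
  rw [this]
  exact continuous_const.mul ((continuous_id.max continuous_const).pow 2)

lemma parallel_of_cross_zero (v w : Fin 2 → ℝ) (hv : v ≠ 0)
    (h : w 0 * v 1 = w 1 * v 0) : ∃ c : ℝ, w = c • v := by
  have hv' : v 0 ≠ 0 ∨ v 1 ≠ 0 := by
    by_contra hc
    push_neg at hc
    apply hv
    funext i
    fin_cases i <;> simp [hc.1, hc.2]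
  rcases hv' with h0 | h1
  · refine ⟨w 0 / v 0, ?_⟩
    funext i
    fin_cases i
    · simp [div_mul_cancel₀, h0]
    · simp only [Pi.smul_apply, smul_eq_mul]
      field_simp
      simp only [Fin.mk_one, Fin.isValue] at *
      linarith [h]
  · refine ⟨w 1 / v 1, ?_⟩
    funext i
    fin_cases i
    · simp only [Pi.smul_apply, smul_eq_mul]
      field_simp
      simp only [Fin.zero_eta, Fin.isValue] at *
      linarith [h]
    · simp [div_mul_cancel₀, h1]

lemma cross_zero_of_parallel (v w : Fin 2 → ℝ) (d : ℝ) (h : w = d • v) :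
    w 0 * v 1 - w 1 * v 0 = 0 := by
  have h0 := congrFun h 0
  have h1 := congrFun h 1
  simp only [Pi.smul_apply, smul_eq_mul] at h0 h1
  rw [h0, h1]; ring

/-- The family `A(t) = t³B₁` for `t ≥ 0`, `A(t) = t³B₂` for `t < 0` is continuously
differentiable, but if `B₁` and `B₂` have no nonzero common eigenvector then there is no
continuous unit-norm family of eigenvectors `u(t)` of `A(t)`. -/
theorem stmt_6 (B₁ B₂ : Matrix (Fin 2) (Fin 2) ℝ)
    (hB₁ : B₁.IsSymm) (hB₂ : B₂.IsSymm)
    (hcommon : ¬ ∃ v : EuclideanSpace ℝ (Fin 2), v ≠ 0 ∧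
      (∃ c : ℝ, B₁.mulVec v = c • v) ∧ (∃ c : ℝ, B₂.mulVec v = c • v))
    (A : ℝ → Matrix (Fin 2) (Fin 2) ℝ)
    (hA : A = fun t => if 0 ≤ t then t ^ 3 • B₁ else t ^ 3 • B₂) :
    ContDiff ℝ 1 A ∧
      ¬ ∃ u : ℝ → EuclideanSpace ℝ (Fin 2), Continuous u ∧ (∀ t, ‖u t‖ = 1) ∧
        ∀ t, ∃ c : ℝ, (A t).mulVec (u t) = c • u t := by
  constructor
  · have hAeq : A = fun t => gcube t • B₁ + (-(gcube (-t))) • B₂ := by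
      rw [hA]
      funext t
      by_cases ht : 0 ≤ t
      · have h1 : max t 0 = t := max_eq_left ht
        have h2 : max (-t) 0 = 0 := max_eq_right (neg_nonpos.mpr ht)
        simp [gcube, h1, h2, if_pos ht]
      · push_neg at ht
        have h1 : max t 0 = 0 := max_eq_right ht.le
        have h2 : max (-t) 0 = -t := max_eq_left (neg_nonneg.mpr ht.le)
        simp only [gcube, h1, h2, if_neg (not_le.mpr ht)]
        rw [show (-t) ^ 3 = -(t^3) by ring]
        simp
    rw [hAeq]
    exact (gcube_contDiff.smul contDiff_const).add
      (((gcube_contDiff.comp (contDiff_neg)).neg).smul contDiff_const)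
  · rintro ⟨u, hu, hnorm, heig⟩
    have hcoord : ∀ j, Continuous fun t => u t j := by
      intro j
      have := (EuclideanSpace.proj j : EuclideanSpace ℝ (Fin 2) →L[ℝ] ℝ).continuous.comp hu
      exact this
    have hmv : ∀ (B : Matrix (Fin 2) (Fin 2) ℝ) (i : Fin 2),
        Continuous fun t => B.mulVec (u t) i := by
      intro B i
      simp only [Matrix.mulVec, dotProduct]
      exact continuous_finset_sum _ fun j _ => continuous_const.mul (hcoord j)
    have key : ∀ (B : Matrix (Fin 2) (Fin 2) ℝ) (S : Set ℝ),
        (0 : ℝ) ∈ closure S → (𝓝[S] (0:ℝ)).NeBot →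
        (∀ t ∈ S, ∃ d : ℝ, B.mulVec (u t) = d • u t) →
        ∃ c : ℝ, B.mulVec (u 0) = c • u 0 := by
      intro B S _hcl hne hpar
      set φ : ℝ → ℝ := fun t => B.mulVec (u t) 0 * u t 1 - B.mulVec (u t) 1 * u t 0 with hφ
      have hφc : Continuous φ :=
        ((hmv B 0).mul (hcoord 1)).sub ((hmv B 1).mul (hcoord 0))
      have h1 : Tendsto φ (𝓝[S] 0) (𝓝 (φ 0)) :=
        (hφc.tendsto 0).mono_left nhdsWithin_le_nhds
      have h2 : Tendsto φ (𝓝[S] 0) (𝓝 0) := by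
        refine Tendsto.congr' ?_ tendsto_const_nhds
        filter_upwards [self_mem_nhdsWithin] with s hs
        obtain ⟨d, hd⟩ := hpar s hs
        exact (cross_zero_of_parallel (u s) (B.mulVec (u s)) d hd).symm
      have hφ0 : φ 0 = 0 := tendsto_nhds_unique h1 h2
      have hu0 : (u 0 : Fin 2 → ℝ) ≠ 0 := by
        intro h
        have : ‖u 0‖ = 1 := hnorm 0
        rw [show (u 0 : EuclideanSpace ℝ (Fin 2)) = 0 from (WithLp.ofLp_eq_zero 2).mp h] at this
        simp at this
      have : B.mulVec (u 0) 0 * u 0 1 = B.mulVec (u 0) 1 * u 0 0 := by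
        have := hφ0
        simp only [hφ] at this
        linarith
      exact parallel_of_cross_zero (u 0) (B.mulVec (u 0)) hu0 this
    have hpos : ∀ t ∈ Ioi (0:ℝ), ∃ d : ℝ, B₁.mulVec (u t) = d • u t := by
      intro t ht
      obtain ⟨c, hc⟩ := heig t
      rw [hA] at hc
      simp only [if_pos (le_of_lt (mem_Ioi.mp ht))] at hc
      rw [Matrix.smul_mulVec] at hc
      have ht3 : t ^ 3 ≠ 0 := pow_ne_zero 3 (ne_of_gt (mem_Ioi.mp ht))
      refine ⟨(t ^ 3)⁻¹ * c, ?_⟩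
      have := congrArg (fun w => (t ^ 3)⁻¹ • w) hc
      simp only [smul_smul, inv_mul_cancel₀ ht3, one_smul] at this
      exact this
    have hneg : ∀ t ∈ Iio (0:ℝ), ∃ d : ℝ, B₂.mulVec (u t) = d • u t := by
      intro t ht
      obtain ⟨c, hc⟩ := heig t
      rw [hA] at hc
      simp only [if_neg (not_le.mpr (mem_Iio.mp ht))] at hc
      rw [Matrix.smul_mulVec] at hc
      have ht3 : t ^ 3 ≠ 0 := pow_ne_zero 3 (ne_of_lt (mem_Iio.mp ht))
      refine ⟨(t ^ 3)⁻¹ * c, ?_⟩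
      have := congrArg (fun w => (t ^ 3)⁻¹ • w) hc
      simp only [smul_smul, inv_mul_cancel₀ ht3, one_smul] at this
      exact this
    have hc₁ := key B₁ (Ioi 0) (by simp [closure_Ioi]) (by infer_instance) hpos
    have hc₂ := key B₂ (Iio 0) (by simp [closure_Iio]) (by infer_instance) hneg
    apply hcommon
    refine ⟨u 0, ?_, ?_, ?_⟩
    · intro h
      have := hnorm 0
      rw [h] at this
      simp at this
    · obtain ⟨c, hc⟩ := hc₁
      exact ⟨c, hc⟩
    · obtain ⟨c, hc⟩ := hc₂
      exact ⟨c, hc⟩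
end

section
/- Let A : ℝ → Matrix (n×n, ℝ) be continuously differentiable with A(t) symmetric for every t. Let λ₀ be an eigenvalue of A(t₀) whose eigenspace { v : A(t₀)·v = λ₀·v } is one-dimensional, and let v₀ be a unit eigenvector for λ₀. Then there exist ε > 0 and continuously differentiable functions λ : (t₀−ε, t₀+ε) → ℝ and u : (t₀−ε, t₀+ε) → ℝⁿ such that A(t)·u(t) = λ(t)·u(t) and ‖u(t)‖ = 1 for all t ∈ (t₀−ε, t₀+ε), with λ(t₀) = λ₀ and u(t₀) = v₀. -/
attribute [local instance] Matrix.normedAddCommGroup Matrix.normedSpace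

open Set




noncomputable def mvL (n : ℕ) :
    Matrix (Fin n) (Fin n) ℝ →ₗ[ℝ] EuclideanSpace ℝ (Fin n) →ₗ[ℝ] EuclideanSpace ℝ (Fin n) where
  toFun M :=
    { toFun := fun v => WithLp.toLp 2 (M.mulVec v)
      map_add' := fun x y => by simp [Matrix.mulVec_add]
      map_smul' := fun c x => by simp [Matrix.mulVec_smul] }
  map_add' M N := by ext v i; simp [Matrix.add_mulVec]
  map_smul' c M := by ext v i; simp [Matrix.smul_mulVec]

noncomputable def mvE (n : ℕ) :
    Matrix (Fin n) (Fin n) ℝ →L[ℝ] EuclideanSpace ℝ (Fin n) →L[ℝ] EuclideanSpace ℝ (Fin n) :=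
  LinearMap.toContinuousLinearMap
    ((LinearMap.toContinuousLinearMap.toLinearMap) ∘ₗ mvL n)

@[simp] lemma mvE_apply (n : ℕ) (M : Matrix (Fin n) (Fin n) ℝ) (v : EuclideanSpace ℝ (Fin n)) :
    mvE n M v = WithLp.toLp 2 (M.mulVec v) := rfl

noncomputable def Gmap (n : ℕ) (A : ℝ → Matrix (Fin n) (Fin n) ℝ)
    (v₀ : EuclideanSpace ℝ (Fin n)) :
    ℝ × (EuclideanSpace ℝ (Fin n) × ℝ) → ℝ × (EuclideanSpace ℝ (Fin n) × ℝ) :=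
  fun p => (p.1, (mvE n (A p.1) p.2.1 - p.2.2 • p.2.1, (innerSL ℝ v₀) p.2.1 - 1))

lemma Gmap_contDiff (n : ℕ) (A : ℝ → Matrix (Fin n) (Fin n) ℝ)
    (v₀ : EuclideanSpace ℝ (Fin n)) (hA : ContDiff ℝ 1 A) :
    ContDiff ℝ 1 (Gmap n A v₀) := by
  apply ContDiff.prodMk contDiff_fst
  apply ContDiff.prodMk
  · apply ContDiff.sub
    · exact ((mvE n).isBoundedBilinearMap.contDiff).comp
        ((hA.comp contDiff_fst).prodMk (contDiff_fst.comp contDiff_snd))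
    · exact (contDiff_snd.comp contDiff_snd).smul (contDiff_fst.comp contDiff_snd)
  · exact ((innerSL ℝ v₀).contDiff.comp (contDiff_fst.comp contDiff_snd)).sub contDiff_const

lemma inner_mulVec_symm {n : ℕ} {M : Matrix (Fin n) (Fin n) ℝ} (hM : M.IsSymm)
    (x y : EuclideanSpace ℝ (Fin n)) :
    inner (𝕜 := ℝ) x (WithLp.toLp 2 (M.mulVec y)) =
      inner (𝕜 := ℝ) (WithLp.toLp 2 (M.mulVec x)) y := by
  simp only [PiLp.inner_apply, RCLike.inner_apply, conj_trivial]
  show ∑ i, (M.mulVec y) i * x i = ∑ i, y i * (M.mulVec x) i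
  simp only [Matrix.mulVec, dotProduct, Finset.mul_sum, Finset.sum_mul]
  rw [Finset.sum_comm]
  refine Finset.sum_congr rfl fun i _ => Finset.sum_congr rfl fun j _ => ?_
  rw [← hM.apply i j]; ring


section Deriv

variable (n : ℕ)

noncomputable abbrev EP (n : ℕ) := ℝ × (EuclideanSpace ℝ (Fin n) × ℝ)

noncomputable def PP1 : EP n →L[ℝ] ℝ := ContinuousLinearMap.fst ℝ ℝ _
noncomputable def PP21 : EP n →L[ℝ] EuclideanSpace ℝ (Fin n) :=
  (ContinuousLinearMap.fst ℝ (EuclideanSpace ℝ (Fin n)) ℝ).comp (ContinuousLinearMap.snd ℝ ℝ _)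
noncomputable def PP22 : EP n →L[ℝ] ℝ :=
  (ContinuousLinearMap.snd ℝ (EuclideanSpace ℝ (Fin n)) ℝ).comp (ContinuousLinearMap.snd ℝ ℝ _)

@[simp] lemma PP1_apply (p : EP n) : PP1 n p = p.1 := rfl
@[simp] lemma PP21_apply (p : EP n) : PP21 n p = p.2.1 := rfl
@[simp] lemma PP22_apply (p : EP n) : PP22 n p = p.2.2 := rfl

noncomputable def Dmap (A : ℝ → Matrix (Fin n) (Fin n) ℝ)
    (v₀ : EuclideanSpace ℝ (Fin n)) (t₀ lam₀ : ℝ)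
    (A' : ℝ →L[ℝ] Matrix (Fin n) (Fin n) ℝ) : EP n →L[ℝ] EP n :=
  (PP1 n).prod
    ((((mvE n (A t₀)).comp (PP21 n) + ((mvE n).comp (A'.comp (PP1 n))).flip v₀
        - (lam₀ • PP21 n + (PP22 n).smulRight v₀))).prod
      ((innerSL ℝ v₀).comp (PP21 n)))

lemma Dmap_apply (A : ℝ → Matrix (Fin n) (Fin n) ℝ)
    (v₀ : EuclideanSpace ℝ (Fin n)) (t₀ lam₀ : ℝ)
    (A' : ℝ →L[ℝ] Matrix (Fin n) (Fin n) ℝ) (x : EP n) :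
    Dmap n A v₀ t₀ lam₀ A' x =
      (x.1, ((WithLp.toLp 2 ((A t₀).mulVec x.2.1))
          + (WithLp.toLp 2 ((A' x.1).mulVec v₀))
          - (lam₀ • x.2.1 + x.2.2 • v₀),
        inner (𝕜 := ℝ) v₀ x.2.1)) := by
  simp [Dmap, ContinuousLinearMap.prod_apply, ContinuousLinearMap.sub_apply,
    ContinuousLinearMap.add_apply, ContinuousLinearMap.comp_apply,
    ContinuousLinearMap.flip_apply, ContinuousLinearMap.smul_apply,
    ContinuousLinearMap.smulRight_apply]

lemma Gmap_hasFDerivAt (A : ℝ → Matrix (Fin n) (Fin n) ℝ)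
    (v₀ : EuclideanSpace ℝ (Fin n)) (t₀ lam₀ : ℝ)
    (A' : ℝ →L[ℝ] Matrix (Fin n) (Fin n) ℝ) (hA' : HasFDerivAt A A' t₀) :
    HasFDerivAt (Gmap n A v₀) (Dmap n A v₀ t₀ lam₀ A') (t₀, (v₀, lam₀)) := by
  set a₀ : EP n := (t₀, (v₀, lam₀))
  have h1 : HasFDerivAt (fun p : EP n => p.1) (PP1 n) a₀ := hasFDerivAt_fst
  have hu : HasFDerivAt (fun p : EP n => p.2.1) (PP21 n) a₀ :=
    hasFDerivAt_fst.comp a₀ hasFDerivAt_snd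
  have hm : HasFDerivAt (fun p : EP n => p.2.2) (PP22 n) a₀ :=
    hasFDerivAt_snd.comp a₀ hasFDerivAt_snd
  have hc : HasFDerivAt (fun p : EP n => mvE n (A p.1))
      ((mvE n).comp (A'.comp (PP1 n))) a₀ :=
    (mvE n).hasFDerivAt.comp a₀ (hA'.comp a₀ h1)
  exact h1.prodMk (((hc.clm_apply hu).sub (hm.smul hu)).prodMk
    (((innerSL ℝ v₀).hasFDerivAt.comp a₀ hu).sub_const 1))

end Deriv

/-- A simple eigenvalue of a continuously differentiable family of symmetric matrices,
together with its unit eigenvector, extends to a continuously differentiable family of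
eigenpairs on a small parameter interval. -/
theorem stmt_8 (n : ℕ) (A : ℝ → Matrix (Fin n) (Fin n) ℝ)
    (hA : ContDiff ℝ 1 A) (hsymm : ∀ t : ℝ, (A t).IsSymm)
    (t₀ lam₀ : ℝ) (v₀ : EuclideanSpace ℝ (Fin n))
    (hv₀ : (A t₀).mulVec v₀ = lam₀ • v₀) (hv₀norm : ‖v₀‖ = 1)
    (hsimple : ∀ v : EuclideanSpace ℝ (Fin n), (A t₀).mulVec v = lam₀ • v →
      ∃ c : ℝ, v = c • v₀) :
    ∃ ε > 0, ∃ lam : ℝ → ℝ, ∃ u : ℝ → EuclideanSpace ℝ (Fin n),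
      ContDiffOn ℝ 1 lam (Ioo (t₀ - ε) (t₀ + ε)) ∧
      ContDiffOn ℝ 1 u (Ioo (t₀ - ε) (t₀ + ε)) ∧
      (∀ t ∈ Ioo (t₀ - ε) (t₀ + ε), (A t).mulVec (u t) = lam t • u t ∧ ‖u t‖ = 1) ∧
      lam t₀ = lam₀ ∧ u t₀ = v₀ := by
  classical
  obtain ⟨A', hA'⟩ : ∃ A', HasFDerivAt A A' t₀ := ⟨_, (hA.differentiable one_ne_zero t₀).hasFDerivAt⟩
  set D := Dmap n A v₀ t₀ lam₀ A' with hD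
  have hvv : inner (𝕜 := ℝ) v₀ v₀ = (1:ℝ) := by
    rw [real_inner_self_eq_norm_mul_norm, hv₀norm]; norm_num
  -- injectivity of the derivative
  have hker : ∀ x : EP n, D x = 0 → x = 0 := by
    rintro ⟨s, w, μ⟩ hx
    rw [hD, Dmap_apply] at hx
    have hs : s = 0 := congrArg Prod.fst hx
    have hw := congrArg (fun q : EP n => q.2.1) hx
    have hin := congrArg (fun q : EP n => q.2.2) hx
    simp only [Prod.snd_zero, Prod.fst_zero] at hw hin
    subst hs
    rw [map_zero, Matrix.zero_mulVec] at hw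
    rw [WithLp.toLp_zero,
      add_zero, sub_eq_zero] at hw
    -- hw : (A t₀).mulVec w = lam₀ • w + μ • v₀
    have hin' : inner (𝕜 := ℝ) v₀ w = (0:ℝ) := hin
    have h1 : inner (𝕜 := ℝ) v₀ (WithLp.toLp 2 ((A t₀).mulVec w))
        = (0:ℝ) := by
      rw [inner_mulVec_symm (hsymm t₀)]
      have hcongr := congrArg (fun z : Fin n → ℝ => inner (𝕜 := ℝ) (WithLp.toLp 2 z) w) hv₀
      have h2 : inner (𝕜 := ℝ) (lam₀ • v₀ : EuclideanSpace ℝ (Fin n)) w = (0:ℝ) := by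
        rw [real_inner_smul_left, hin', mul_zero]
      exact hcongr.trans h2
    have h2 : inner (𝕜 := ℝ) v₀ ((lam₀ • w + μ • v₀ : EuclideanSpace ℝ (Fin n))) = μ := by
      rw [inner_add_right, real_inner_smul_right, real_inner_smul_right, hin', hvv]
      ring
    have hμ : μ = 0 := by rw [← h2, ← hw, h1]
    subst hμ
    have hw2 : (A t₀).mulVec w = lam₀ • w := by
      have := congrArg WithLp.ofLp hw
      rw [zero_smul, add_zero] at this
      exact this
    obtain ⟨c, hc⟩ := hsimple w hw2
    have hc0 : c = 0 := by
      have : inner (𝕜 := ℝ) v₀ (c • v₀ : EuclideanSpace ℝ (Fin n)) = (0:ℝ) := by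
        rw [← hc]; exact hin'
      rwa [real_inner_smul_right, hvv, mul_one] at this
    have hw0 : w = 0 := by rw [hc, hc0, zero_smul]
    simp [hw0]
  have hbij : Function.Bijective D := by
    have hinj : Function.Injective (D : EP n →ₗ[ℝ] EP n) := by
      rw [← LinearMap.ker_eq_bot, LinearMap.ker_eq_bot']
      exact fun m hm => hker m hm
    exact ⟨hinj, LinearMap.injective_iff_surjective.mp hinj⟩
  let eD : EP n ≃L[ℝ] EP n :=
    (LinearEquiv.ofBijective (D : EP n →ₗ[ℝ] EP n) hbij).toContinuousLinearEquiv
  have heD : (eD : EP n →L[ℝ] EP n) = D := ContinuousLinearMap.ext fun x => rfl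
  have hGc : ContDiffAt ℝ 1 (Gmap n A v₀) (t₀, (v₀, lam₀)) := (Gmap_contDiff n A v₀ hA).contDiffAt
  have hD' : HasFDerivAt (Gmap n A v₀) (eD : EP n →L[ℝ] EP n) (t₀, (v₀, lam₀)) :=
    heD ▸ Gmap_hasFDerivAt n A v₀ t₀ lam₀ A' hA'
  have hstrict : HasStrictFDerivAt (Gmap n A v₀) (eD : EP n →L[ℝ] EP n) (t₀, (v₀, lam₀)) :=
    hGc.hasStrictFDerivAt' hD' one_ne_zero
  set g : EP n → EP n := hstrict.localInverse _ _ _ with hg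
  have hGa₀ : Gmap n A v₀ (t₀, (v₀, lam₀)) = (t₀, (0, 0)) := by
    have h1 : (show EuclideanSpace ℝ (Fin n) from mvE n (A t₀) v₀) - lam₀ • v₀ = 0 := by
      rw [mvE_apply, hv₀, WithLp.toLp_smul, WithLp.toLp_ofLp, sub_self]
    have h2 : (innerSL ℝ v₀) v₀ - (1:ℝ) = 0 := by
      simp only [innerSL_apply_apply]
      show inner (𝕜 := ℝ) v₀ v₀ - (1:ℝ) = 0
      rw [hvv]; ring
    show (t₀, (mvE n (A t₀) v₀ - lam₀ • v₀, (innerSL ℝ v₀) v₀ - 1)) = (t₀, (0, 0))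
    rw [h1, h2]
  have hgC : ContDiffAt ℝ 1 g ((t₀, ((0 : EuclideanSpace ℝ (Fin n)), (0:ℝ))) : EP n) := by
    have h := hGc.to_localInverse hD' one_ne_zero
    rwa [hGa₀] at h
  have hleft : g (t₀, (0,0)) = (t₀, (v₀, lam₀)) := by
    have h := hstrict.localInverse_apply_image
    rwa [hGa₀] at h
  have hright : ∀ᶠ y in nhds ((t₀, ((0 : EuclideanSpace ℝ (Fin n)), (0:ℝ))) : EP n),
      Gmap n A v₀ (g y) = y := by
    have h := hstrict.eventually_right_inverse
    rwa [hGa₀] at h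
  have hj : ContDiff ℝ 1 (fun t : ℝ => ((t, (0,0)) : EP n)) := contDiff_id.prodMk contDiff_const
  have hev : ∀ᶠ t in nhds t₀, Gmap n A v₀ (g (t, (0,0))) = (t, (0,0)) :=
    ((hj.continuous.continuousAt
      (x := t₀)) : Filter.Tendsto _ _ _).eventually hright
  set u1 : ℝ → EuclideanSpace ℝ (Fin n) := fun t => (g (t,(0,0))).2.1 with hu1
  set l1 : ℝ → ℝ := fun t => (g (t,(0,0))).2.2 with hl1
  have hu1C : ContDiffAt ℝ 1 u1 t₀ :=
    (contDiff_fst.comp contDiff_snd).contDiffAt.comp t₀ (hgC.comp t₀ hj.contDiffAt)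
  have hl1C : ContDiffAt ℝ 1 l1 t₀ :=
    (contDiff_snd.comp contDiff_snd).contDiffAt.comp t₀ (hgC.comp t₀ hj.contDiffAt)
  obtain ⟨s₁, hs₁n, hs₁⟩ := hu1C.contDiffOn le_rfl (by simp)
  obtain ⟨s₂, hs₂n, hs₂⟩ := hl1C.contDiffOn le_rfl (by simp)
  have hmem : s₁ ∩ s₂ ∩ {t | Gmap n A v₀ (g (t,(0,0))) = (t,(0,0))} ∈ nhds t₀ :=
    Filter.inter_mem (Filter.inter_mem hs₁n hs₂n) hev
  obtain ⟨ε, hε, hball⟩ := Metric.mem_nhds_iff.mp hmem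
  have hIoo : Ioo (t₀ - ε) (t₀ + ε) ⊆ s₁ ∩ s₂ ∩ {t | Gmap n A v₀ (g (t,(0,0))) = (t,(0,0))} := by
    rw [← Real.ball_eq_Ioo]; exact hball
  -- key facts on the interval
  have hkey : ∀ t ∈ Ioo (t₀ - ε) (t₀ + ε),
      (A t).mulVec (u1 t) = l1 t • u1 t ∧ inner (𝕜 := ℝ) v₀ (u1 t) = (1:ℝ) := by
    intro t ht
    have heq := (hIoo ht).2
    have h1 : (g (t,(0,0))).1 = t := congrArg Prod.fst heq
    have h2 := congrArg (fun q : EP n => q.2.1) heq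
    have h3 := congrArg (fun q : EP n => q.2.2) heq
    simp only at h2 h3
    constructor
    · have h2' : mvE n (A ((g (t,(0,0))).1)) (u1 t) - l1 t • u1 t = 0 := h2
      rw [h1] at h2'
      have := sub_eq_zero.mp h2'
      rw [mvE_apply] at this
      exact congrArg WithLp.ofLp this
    · have h3' : (innerSL ℝ v₀) (u1 t) - (1:ℝ) = 0 := h3
      have := sub_eq_zero.mp h3'
      exact this
  have hne : ∀ t ∈ Ioo (t₀ - ε) (t₀ + ε), u1 t ≠ 0 := by
    intro t ht h0
    have := (hkey t ht).2
    rw [h0, inner_zero_right] at this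
    norm_num at this
  have hu1CO : ContDiffOn ℝ 1 u1 (Ioo (t₀ - ε) (t₀ + ε)) :=
    hs₁.mono (fun x hx => ((hIoo hx).1).1)
  have hl1CO : ContDiffOn ℝ 1 l1 (Ioo (t₀ - ε) (t₀ + ε)) :=
    hs₂.mono (fun x hx => ((hIoo hx).1).2)
  have hnormC : ContDiffOn ℝ 1 (fun t => ‖u1 t‖⁻¹) (Ioo (t₀ - ε) (t₀ + ε)) :=
    (hu1CO.norm ℝ hne).inv (fun t ht => norm_ne_zero_iff.mpr (hne t ht))
  refine ⟨ε, hε, l1, fun t => ‖u1 t‖⁻¹ • u1 t, hl1CO, hnormC.smul hu1CO, ?_, ?_, ?_⟩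
  · intro t ht
    obtain ⟨heig, hinn⟩ := hkey t ht
    have hnz := hne t ht
    have hnorm0 : ‖u1 t‖ ≠ 0 := norm_ne_zero_iff.mpr hnz
    constructor
    · show (A t).mulVec (‖u1 t‖⁻¹ • u1 t) = l1 t • (‖u1 t‖⁻¹ • u1 t)
      simp only [WithLp.ofLp_smul]
      rw [Matrix.mulVec_smul]
      rw [heig, smul_comm]
    · rw [norm_smul]
      simp [hnorm0, abs_of_nonneg (norm_nonneg (u1 t))]
  · show (g (t₀,(0,0))).2.2 = lam₀
    rw [hleft]
  · show ‖u1 t₀‖⁻¹ • u1 t₀ = v₀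
    have : u1 t₀ = v₀ := by show (g (t₀,(0,0))).2.1 = v₀; rw [hleft]
    rw [this, hv₀norm]
    simp
end

section
/- Let A : ℝ → Matrix (n×n, ℝ) with A(t) symmetric for every t, let λ¹, λ² : ℝ → ℝ, and let u¹, u² : ℝ → ℝⁿ be continuous with A(t)·uⁱ(t) = λⁱ(t)·uⁱ(t) and ‖uⁱ(t)‖ = 1 for all t and i = 1, 2. Suppose there exists ε > 0 such that λ¹(t) ≠ λ²(t) whenever 0 < |t − t₀| < ε. Then ⟨u¹(t₀), u²(t₀)⟩ = 0. -/
open scoped InnerProductSpace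
section
open Matrix

lemma aux_sym_inner (n : ℕ) (M : Matrix (Fin n) (Fin n) ℝ) (hM : M.IsSymm)
    (x y : EuclideanSpace ℝ (Fin n)) :
    ⟪((WithLp.equiv 2 (Fin n → ℝ)).symm (M.mulVec x)), y⟫_ℝ
      = ⟪x, ((WithLp.equiv 2 (Fin n → ℝ)).symm (M.mulVec y))⟫_ℝ := by
  simp only [PiLp.inner_apply, RCLike.inner_apply, conj_trivial, WithLp.equiv_symm_apply, PiLp.toLp_apply]
  conv_lhs => enter [2, i]; rw [mul_comm]
  conv_rhs => enter [2, i]; rw [mul_comm]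
  have h1 : ∑ i, M.mulVec x i * y i = M.mulVec x ⬝ᵥ (y : Fin n → ℝ) := rfl
  have h2 : ∑ i, x i * M.mulVec y i = (x : Fin n → ℝ) ⬝ᵥ M.mulVec y := rfl
  rw [h1, h2, Matrix.dotProduct_mulVec, ← Matrix.mulVec_transpose, hM.eq]

end

/-- Two continuous families of unit eigenvectors whose eigenvalues are distinct for all
`t` near (but not equal to) `t₀` are orthogonal at `t₀`. -/
theorem stmt_9 (n : ℕ) (A : ℝ → Matrix (Fin n) (Fin n) ℝ)
    (hsymm : ∀ t : ℝ, (A t).IsSymm)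
    (lam₁ lam₂ : ℝ → ℝ) (u₁ u₂ : ℝ → EuclideanSpace ℝ (Fin n))
    (hu₁ : Continuous u₁) (hu₂ : Continuous u₂)
    (heig₁ : ∀ t : ℝ, (A t).mulVec (u₁ t) = lam₁ t • u₁ t)
    (heig₂ : ∀ t : ℝ, (A t).mulVec (u₂ t) = lam₂ t • u₂ t)
    (hnorm₁ : ∀ t : ℝ, ‖u₁ t‖ = 1) (hnorm₂ : ∀ t : ℝ, ‖u₂ t‖ = 1)
    (t₀ : ℝ) (ε : ℝ) (hε : 0 < ε)
    (hne : ∀ t : ℝ, 0 < |t - t₀| → |t - t₀| < ε → lam₁ t ≠ lam₂ t) :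
    ⟪u₁ t₀, u₂ t₀⟫_ℝ = 0 := by
  set f : ℝ → ℝ := fun t => ⟪u₁ t, u₂ t⟫_ℝ with hf
  have hfc : Continuous f := hu₁.inner hu₂
  have hzero : ∀ t : ℝ, 0 < |t - t₀| → |t - t₀| < ε → f t = 0 := by
    intro t h1 h2
    have key : lam₁ t * f t = lam₂ t * f t := by
      have e1 := aux_sym_inner n (A t) (hsymm t) (u₁ t) (u₂ t)
      rw [heig₁ t, heig₂ t] at e1
      have e2 : ((WithLp.equiv 2 (Fin n → ℝ)).symm (lam₁ t • (u₁ t : Fin n → ℝ)))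
          = lam₁ t • u₁ t := rfl
      have e3 : ((WithLp.equiv 2 (Fin n → ℝ)).symm (lam₂ t • (u₂ t : Fin n → ℝ)))
          = lam₂ t • u₂ t := rfl
      rw [e2, e3, real_inner_smul_left, real_inner_smul_right] at e1
      exact e1
    have : (lam₁ t - lam₂ t) * f t = 0 := by ring_nf; linarith
    rcases mul_eq_zero.mp this with h | h
    · exact absurd (sub_eq_zero.mp h) (hne t h1 h2)
    · exact h
  have hev : ∀ᶠ t in nhdsWithin t₀ {t₀}ᶜ, f t = 0 := by
    filter_upwards [self_mem_nhdsWithin,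
      eventually_nhdsWithin_of_eventually_nhds
        (Metric.eventually_nhds_iff.mpr ⟨ε, hε, fun {t} ht => ht⟩)] with t ht1 ht2
    exact hzero t (abs_pos.mpr (sub_ne_zero.mpr ht1)) (by simpa [Real.dist_eq] using ht2)
  have h1 : Filter.Tendsto f (nhdsWithin t₀ {t₀}ᶜ) (nhds (f t₀)) :=
    (hfc.tendsto t₀).mono_left nhdsWithin_le_nhds
  have h2 : Filter.Tendsto f (nhdsWithin t₀ {t₀}ᶜ) (nhds 0) :=
    Filter.Tendsto.congr' (Filter.EventuallyEq.symm hev) tendsto_const_nhds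
  exact tendsto_nhds_unique h1 h2
end
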